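/- There exist constants τ₀ > 0 and C > 0, depending only on n, the constants c_Y, C_R, c_ρ, A_0, A_1, the number β, and the bounds sup|V − E| and sup|∂_y V|, such that for every 0 < τ ≤ τ₀, every 0 < ε ≤ τ₀/10, every smooth ρ : ℝ^{n−1} → (−∞, 0] with |∂_{y'}ρ| ≤ c_ρ and |∂²_{y'}ρ| ≤ c_ρ, and every (y, ξ) ∈ ℝⁿ × ℝⁿ with y ∈ W(τ, ε) and p_ψ(y, ξ) = 0, one has |a(y', ξ') − (β² + E − V(y))| ≤ C τ₀ and |ξ_n| ≤ C τ₀. -/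

import Mathlib

open scoped BigOperators

noncomputable section

/-- `ℝ^m` with its Euclidean norm. -/
abbrev Esp (m : ℕ) := EuclideanSpace ℝ (Fin m)

/-- The quadratic form with (real) coefficient matrix `M`, evaluated at `v`. -/
noncomputable def quadForm {m : ℕ} (M : Matrix (Fin m) (Fin m) ℝ) (v : Esp m) : ℝ :=
  ∑ i, ∑ j, M i j * v i * v j

/-- The quadratic form with real coefficient matrix `M`, evaluated at a complex
covector `v`. -/
noncomputable def quadFormC {m : ℕ} (M : Matrix (Fin m) (Fin m) ℝ) (v : Fin m → ℂ) : ℂ :=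
  ∑ i, ∑ j, (M i j : ℂ) * v i * v j

/-- The complex tangential covector `ξ' + i ∂_{y'}ψ(y)` where `ψ(y) = (⋯)yₙ + 2τρ(y')`,
so that `∂_{y'_i}ψ = 2τ ∂_{y'_i}ρ(y')`. -/
noncomputable def zetaPrime {m : ℕ} (τ : ℝ) (ρ : Esp m → ℝ) (y' ξ' : Esp m) :
    Fin m → ℂ :=
  fun i => (ξ' i : ℂ) + Complex.I * (2 * τ * fderiv ℝ ρ y' (EuclideanSpace.single i 1))

/-- The Poisson bracket `{f, g} = Σⱼ (∂_{ξⱼ}f ∂_{yⱼ}g − ∂_{yⱼ}f ∂_{ξⱼ}g)` of two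
functions on phase space `ℝⁿ_y × ℝⁿ_ξ`, where `y = (y', yₙ)` and `ξ = (ξ', ξₙ)`. -/
noncomputable def poissonBracket {m : ℕ}
    (f g : (Esp m × ℝ) × (Esp m × ℝ) → ℝ) (z : (Esp m × ℝ) × (Esp m × ℝ)) : ℝ :=
  (∑ j : Fin m,
      (fderiv ℝ f z ((0 : Esp m × ℝ), (EuclideanSpace.single j (1 : ℝ), (0 : ℝ)))
          * fderiv ℝ g z ((EuclideanSpace.single j (1 : ℝ), (0 : ℝ)), (0 : Esp m × ℝ))
        - fderiv ℝ f z ((EuclideanSpace.single j (1 : ℝ), (0 : ℝ)), (0 : Esp m × ℝ))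
          * fderiv ℝ g z ((0 : Esp m × ℝ), (EuclideanSpace.single j (1 : ℝ), (0 : ℝ)))))
    + (fderiv ℝ f z ((0 : Esp m × ℝ), ((0 : Esp m), (1 : ℝ)))
          * fderiv ℝ g z (((0 : Esp m), (1 : ℝ)), (0 : Esp m × ℝ))
        - fderiv ℝ f z (((0 : Esp m), (1 : ℝ)), (0 : Esp m × ℝ))
          * fderiv ℝ g z ((0 : Esp m × ℝ), ((0 : Esp m), (1 : ℝ))))

/-- The conjugated symbol `p_ψ(y, ξ) = p(y, ξ + i ∂_yψ(y))` for
`p(y,ξ) = ξₙ² + a(y',ξ') − 2yₙ b(y',ξ') + R(y,ξ') − 1` and `ψ(y) = yₙ + 2τρ(y')`,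
where `a`, `b`, `R` are the quadratic forms with coefficient matrices `A`, `B`, `R`. -/
noncomputable def pPsi {m : ℕ} (A B : Esp m → Matrix (Fin m) (Fin m) ℝ)
    (R : Esp m × ℝ → Matrix (Fin m) (Fin m) ℝ) (τ : ℝ) (ρ : Esp m → ℝ)
    (z : (Esp m × ℝ) × (Esp m × ℝ)) : ℂ :=
  ((z.2.2 : ℂ) + Complex.I) ^ 2
    + quadFormC (A z.1.1) (zetaPrime τ ρ z.1.1 z.2.1)
    - 2 * (z.1.2 : ℂ) * quadFormC (B z.1.1) (zetaPrime τ ρ z.1.1 z.2.1)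
    + quadFormC (R z.1) (zetaPrime τ ρ z.1.1 z.2.1)
    - 1

/-- The conjugated Schrödinger symbol `p_ψ(y, ξ) = p(y, ξ + i ∂_yψ(y))` for
`p(y,ξ) = ξₙ² + a(y',ξ') − 2yₙ b(y',ξ') + R(y,ξ') + V(y) − E` and
`ψ(y) = β yₙ + 2τρ(y')`, where `a`, `b`, `R` are the quadratic forms with coefficient
matrices `A`, `B`, `R`. -/
noncomputable def pPsiSch {m : ℕ} (A B : Esp m → Matrix (Fin m) (Fin m) ℝ)
    (R : Esp m × ℝ → Matrix (Fin m) (Fin m) ℝ) (V : Esp m × ℝ → ℝ) (E β τ : ℝ)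
    (ρ : Esp m → ℝ) (z : (Esp m × ℝ) × (Esp m × ℝ)) : ℂ :=
  ((z.2.2 : ℂ) + Complex.I * (β : ℂ)) ^ 2
    + quadFormC (A z.1.1) (zetaPrime τ ρ z.1.1 z.2.1)
    - 2 * (z.1.2 : ℂ) * quadFormC (B z.1.1) (zetaPrime τ ρ z.1.1 z.2.1)
    + quadFormC (R z.1) (zetaPrime τ ρ z.1.1 z.2.1)
    + ((V z.1 - E : ℝ) : ℂ)

lemma quadFormC_decomp {m : ℕ} (M : Matrix (Fin m) (Fin m) ℝ) (x v : Esp m) :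
    quadFormC M (fun i => (x i : ℂ) + Complex.I * (v i : ℂ))
      = ((quadForm M x - quadForm M v : ℝ) : ℂ)
        + (((∑ i, ∑ j, M i j * (x i * v j + v i * x j)) : ℝ) : ℂ) * Complex.I := by
  have h : ∀ i j : Fin m, (M i j : ℂ) * ((x i : ℂ) + Complex.I * (v i : ℂ)) * ((x j : ℂ) + Complex.I * (v j : ℂ))
      = ((M i j * x i * x j - M i j * v i * v j : ℝ) : ℂ)
        + ((M i j * (x i * v j + v i * x j) : ℝ) : ℂ) * Complex.I := by
    intro i j; push_cast; linear_combination ((M i j : ℂ) * v i * v j) * Complex.I_sq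
  simp only [quadFormC, quadForm, h]
  push_cast
  simp only [Finset.sum_add_distrib, Finset.sum_sub_distrib, ← Finset.sum_mul]

lemma quadForm_add {m : ℕ} (M : Matrix (Fin m) (Fin m) ℝ) (x v : Esp m) :
    quadForm M (x + v) = quadForm M x + quadForm M v
      + ∑ i, ∑ j, M i j * (x i * v j + v i * x j) := by
  simp only [quadForm, PiLp.add_apply, ← Finset.sum_add_distrib]
  exact Finset.sum_congr rfl fun i _ => Finset.sum_congr rfl fun j _ => by ring

lemma double_sum_bound {m : ℕ} (f : Fin m → Fin m → ℝ) (Cb : ℝ)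
    (h : ∀ i j, |f i j| ≤ Cb) : |∑ i, ∑ j, f i j| ≤ (m : ℝ)^2 * Cb := by
  calc |∑ i, ∑ j, f i j| ≤ ∑ i, |∑ j, f i j| := Finset.abs_sum_le_sum_abs _ _
    _ ≤ ∑ _i : Fin m, ∑ _j : Fin m, Cb := by
        refine Finset.sum_le_sum fun i _ => ?_
        exact (Finset.abs_sum_le_sum_abs _ _).trans (Finset.sum_le_sum fun j _ => h i j)
    _ = (m : ℝ)^2 * Cb := by simp [Finset.sum_const]; ring

lemma abs_coord_le_norm {m : ℕ} (x : Esp m) (i : Fin m) : |x i| ≤ ‖x‖ := by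
  rw [EuclideanSpace.norm_eq, ← Real.sqrt_sq_eq_abs]
  apply Real.sqrt_le_sqrt
  have : (x i)^2 = ‖x i‖^2 := by simp [Real.norm_eq_abs, sq_abs]
  rw [this]
  exact Finset.single_le_sum (f := fun j => ‖x j‖^2) (fun j _ => by positivity) (Finset.mem_univ i)

lemma abs_mul_le' (a b A0' Cb : ℝ) (ha : |a| ≤ A0') (hb : |b| ≤ Cb) : |a*b| ≤ A0'*Cb := by
  rw [abs_mul]
  exact mul_le_mul ha hb (abs_nonneg b) ((abs_nonneg a).trans ha)

lemma abs_mul3 (a b c A0' t' s' : ℝ) (ha : |a| ≤ A0') (hb : |b| ≤ t') (hc : |c| ≤ s') :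
    |a*b*c| ≤ A0'*t'*s' := by
  rw [mul_assoc, mul_assoc]
  exact abs_mul_le' _ _ _ _ ha (abs_mul_le' _ _ _ _ hb hc)

lemma cross_bound (a b c d N t : ℝ) (ha : |a| ≤ N) (hb : |b| ≤ t) (hc : |c| ≤ t)
    (hd : |d| ≤ N) : |a*b + c*d| ≤ 2*N*t := by
  calc |a*b+c*d| ≤ |a*b| + |c*d| := abs_add_le _ _
    _ ≤ N*t + t*N := add_le_add (abs_mul_le' _ _ _ _ ha hb) (abs_mul_le' _ _ _ _ hc hd)
    _ = 2*N*t := by ring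

set_option maxHeartbeats 1000000 in
/-- there are `τ₀ > 0` and `C > 0`, depending only on `n = m + 1`, the
constants `c_Y, C_R, c_ρ, A₀, A₁`, the number `β`, and the bounds `MV ≥ sup|V − E|` and
`MdV ≥ sup|∂_y V|`, such that for all data `a, b, R, V` as in the context (with
`β² > MV`, `δ₀ = β² − MV`, and the curvature-type condition
`2b(y',ξ') > MdV` whenever `a(y',ξ') ≥ δ₀/2`), all `0 < τ ≤ τ₀`, `0 < ε ≤ τ₀/10`, all
smooth `ρ ≤ 0` with first and second derivatives bounded by `c_ρ`, and every `(y, ξ)`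
with `y ∈ W(τ, ε)` and `p_ψ(y, ξ) = 0`, one has
`|a(y', ξ') − (β² + E − V(y))| ≤ C τ₀` and `|ξₙ| ≤ C τ₀`. -/
theorem statement4 (m : ℕ) (hm : 1 ≤ m)
    (cY CR cρ A0 A1 : ℝ)
    (hcY : 0 < cY) (hCR : 0 < CR) (hcρ : 0 < cρ) (hA0 : 0 < A0) (hA1 : 0 < A1)
    (E β MV MdV : ℝ) (hβ : 0 < β) (hβ2 : MV < β ^ 2) :
    ∃ τ0 : ℝ, 0 < τ0 ∧ ∃ C : ℝ, 0 < C ∧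
      ∀ (A B : Esp m → Matrix (Fin m) (Fin m) ℝ)
        (R : Esp m × ℝ → Matrix (Fin m) (Fin m) ℝ) (V : Esp m × ℝ → ℝ),
        (∀ i j, ContDiffOn ℝ (⊤ : ℕ∞) (fun y' => A y' i j) {y' : Esp m | ‖y'‖ < 2 * cY}) →
        (∀ i j, ContDiffOn ℝ (⊤ : ℕ∞) (fun y' => B y' i j) {y' : Esp m | ‖y'‖ < 2 * cY}) →
        (∀ i j, ContDiff ℝ (⊤ : ℕ∞) (fun y => R y i j)) →
        ContDiff ℝ (⊤ : ℕ∞) V →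
        (∀ y : Esp m × ℝ, |V y - E| ≤ MV) →
        (∀ y : Esp m × ℝ, ‖fderiv ℝ V y‖ ≤ MdV) →
        (∀ y' : Esp m, ‖y'‖ < 2 * cY → ∀ ξ' : Esp m,
          A1 * ‖ξ'‖ ^ 2 ≤ quadForm (A y') ξ') →
        (∀ y' : Esp m, ‖y'‖ < 2 * cY → ∀ i j,
          |A y' i j| ≤ A0 ∧ |B y' i j| ≤ A0 ∧
          ∀ k, |fderiv ℝ (fun w => A w i j) y' (EuclideanSpace.single k (1 : ℝ))| ≤ A0 ∧
               |fderiv ℝ (fun w => B w i j) y' (EuclideanSpace.single k (1 : ℝ))| ≤ A0) →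
        (∀ y : Esp m × ℝ, |y.2| ≤ 1 → ∀ ξ' : Esp m,
          |quadForm (R y) ξ'| ≤ CR * y.2 ^ 2 * ‖ξ'‖ ^ 2 ∧
          ‖fderiv ℝ (fun w => quadForm (R w) ξ') y‖ ≤ CR * |y.2| * ‖ξ'‖ ^ 2) →
        (∀ y' : Esp m, ‖y'‖ < 2 * cY → ∀ ξ' : Esp m,
          (β ^ 2 - MV) / 2 ≤ quadForm (A y') ξ' → MdV < 2 * quadForm (B y') ξ') →
        ∀ τ : ℝ, 0 < τ → τ ≤ τ0 →
        ∀ ε : ℝ, 0 < ε → ε ≤ τ0 / 10 →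
        ∀ ρ : Esp m → ℝ, ContDiff ℝ (⊤ : ℕ∞) ρ → (∀ y', ρ y' ≤ 0) →
          (∀ y', ‖fderiv ℝ ρ y'‖ ≤ cρ) →
          (∀ y', ‖fderiv ℝ (fderiv ℝ ρ) y'‖ ≤ cρ) →
        ∀ z : (Esp m × ℝ) × (Esp m × ℝ),
          ‖z.1.1‖ < cY → -(2 * ε) < z.1.2 → z.1.2 < τ + 2 * ε →
          pPsiSch A B R V E β τ ρ z = 0 →
          |quadForm (A z.1.1) z.2.1 - (β ^ 2 + E - V z.1)| ≤ C * τ0 ∧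
          |z.2.2| ≤ C * τ0 := by
  have hm' : (1:ℝ) ≤ (m:ℝ) := by exact_mod_cast hm
  obtain ⟨τ0, hτ0pos, hu1, hu2, hu3, hτ0half⟩ :
      ∃ τ0 : ℝ, 0 < τ0 ∧ 2*τ0 ≤ 1 ∧ cρ*(2*τ0) ≤ 1 ∧
        (2*τ0)*(2*(m:ℝ)^2*A0 + CR) ≤ A1/2 ∧ τ0 ≤ 1 := by
    refine ⟨min (min 1 (1/(1+cρ))) (A1/(2*(2*(m:ℝ)^2*A0 + CR))) / 2, by positivity, ?_, ?_, ?_, ?_⟩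
    · have h0 : min (min 1 (1/(1+cρ))) (A1/(2*(2*(m:ℝ)^2*A0 + CR))) ≤ 1 :=
        (min_le_left _ _).trans (min_le_left _ _)
      linarith
    · have h1 : min (min 1 (1/(1+cρ))) (A1/(2*(2*(m:ℝ)^2*A0 + CR))) ≤ 1/(1+cρ) :=
        (min_le_left _ _).trans (min_le_right _ _)
      have h2 : cρ * (1/(1+cρ)) ≤ 1 := by
        rw [mul_one_div, div_le_one (by positivity)]; linarith
      have h3 : cρ * (2 * (min (min 1 (1/(1+cρ))) (A1/(2*(2*(m:ℝ)^2*A0 + CR))) / 2))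
          ≤ cρ * (1/(1+cρ)) := by
        apply mul_le_mul_of_nonneg_left _ hcρ.le
        linarith
      linarith
    · have h1 : min (min 1 (1/(1+cρ))) (A1/(2*(2*(m:ℝ)^2*A0 + CR)))
          ≤ A1/(2*(2*(m:ℝ)^2*A0 + CR)) := min_le_right _ _
      have hD : (0:ℝ) < 2*(m:ℝ)^2*A0 + CR := by positivity
      have h2 := (le_div_iff₀ (by positivity : (0:ℝ) < 2*(2*(m:ℝ)^2*A0 + CR))).mp h1
      nlinarith [min_le_right (min 1 (1/(1+cρ))) (A1/(2*(2*(m:ℝ)^2*A0 + CR)))]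
    · have h0 : min (min 1 (1/(1+cρ))) (A1/(2*(2*(m:ℝ)^2*A0 + CR))) ≤ 1 :=
        (min_le_left _ _).trans (min_le_left _ _)
      linarith
  set K : ℝ := β^2 + |MV| + 3*(m:ℝ)^2*A0 + CR*(m:ℝ)^2 + 1 with hKdef
  have hKpos : 0 < K := by positivity
  set S : ℝ := 2*K/A1 with hSdef
  have hSpos : 0 < S := by positivity
  set C2 : ℝ := 6*(m:ℝ)^2*A0*(S+1)*cρ + 3*CR*(S+1+(m:ℝ))^2 with hC2def
  have hC2pos : 0 < C2 := by positivity
  set C3 : ℝ := (C2/β)^2 + 6*(m:ℝ)^2*A0*cρ^2 + 4*(m:ℝ)^2*A0*S + 2*CR*S + 2*CR*(m:ℝ)^2*cρ^2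
    with hC3def
  have hC3pos : 0 < C3 := by positivity
  clear_value K S C2 C3
  refine ⟨τ0, hτ0pos, C2/β + C3 + 1, by positivity, ?_⟩
  intro A B R V hA' hB' hR' hV' hVb hdV' hA1' hAB hRb hcurv' τ hτ hττ0 ε hε hετ0
    ρ hρ' hρ0' hρ1 hρ2' z hz1 hz2l hz2r hp
  clear hA' hB' hR' hV' hdV' hcurv' hρ' hρ0' hρ2'
  obtain ⟨⟨yp, yn⟩, x, xn⟩ := z
  dsimp only at hz1 hz2l hz2r hp ⊢
  set u : ℝ := 2*τ0 with hudef
  set t : ℝ := cρ * u with htdef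
  have hupos : 0 < u := by positivity
  have htpos : 0 < t := by positivity
  have ht1 : t ≤ 1 := hu2
  have hyn : |yn| ≤ u := by
    exact abs_le.mpr ⟨by linarith, by linarith⟩
  have hyn1 : |yn| ≤ 1 := hyn.trans hu1
  set η : Esp m := WithLp.toLp 2 (fun i => 2 * τ * fderiv ℝ ρ yp (EuclideanSpace.single i 1)) with hηdef
  have hηi : ∀ i, |η i| ≤ t := by
    intro i
    have h1 : |fderiv ℝ ρ yp (EuclideanSpace.single i 1)| ≤ cρ := by
      calc |fderiv ℝ ρ yp (EuclideanSpace.single i 1)|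
          = ‖fderiv ℝ ρ yp (EuclideanSpace.single i 1)‖ := (Real.norm_eq_abs _).symm
        _ ≤ ‖fderiv ℝ ρ yp‖ * ‖EuclideanSpace.single i (1:ℝ)‖ :=
            (fderiv ℝ ρ yp).le_opNorm _
        _ ≤ cρ := by
            rw [EuclideanSpace.norm_single, norm_one, mul_one]; exact hρ1 yp
    have : η i = 2 * τ * fderiv ℝ ρ yp (EuclideanSpace.single i 1) := rfl
    rw [this, abs_mul, abs_mul]
    have h2 : |(2:ℝ)| = 2 := by norm_num
    have h3 : |τ| = τ := abs_of_pos hτ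
    rw [h2, h3]
    have h4 : τ * |fderiv ℝ ρ yp (EuclideanSpace.single i 1)| ≤ τ0 * cρ :=
      mul_le_mul hττ0 h1 (abs_nonneg _) hτ0pos.le
    rw [htdef, hudef]
    linarith
  have hηn : ‖η‖ ≤ (m:ℝ) * t := by
    rw [EuclideanSpace.norm_eq]
    have h1 : ∑ i, ‖η i‖^2 ≤ ((m:ℝ)*t)^2 := by
      calc ∑ i, ‖η i‖^2 ≤ ∑ _i : Fin m, t^2 := by
            refine Finset.sum_le_sum fun i _ => ?_
            rw [Real.norm_eq_abs]
            exact pow_le_pow_left₀ (abs_nonneg _) (hηi i) 2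
        _ = (m:ℝ) * t^2 := by simp [Finset.sum_const]
        _ ≤ ((m:ℝ)*t)^2 := by nlinarith
    calc Real.sqrt (∑ i, ‖η i‖^2) ≤ Real.sqrt (((m:ℝ)*t)^2) := Real.sqrt_le_sqrt h1
      _ = (m:ℝ)*t := Real.sqrt_sq (by positivity)
  have hζ : zetaPrime τ ρ yp x = fun i => ((x i : ℝ) : ℂ) + Complex.I * ((η i : ℝ) : ℂ) := by
    funext i
    simp only [zetaPrime, hηdef]
    push_cast
    ring
  have hdec : pPsiSch A B R V E β τ ρ ((yp, yn), (x, xn)) =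
      ((xn^2 - β^2 + (quadForm (A yp) x - quadForm (A yp) η)
        - 2*yn*(quadForm (B yp) x - quadForm (B yp) η)
        + (quadForm (R (yp,yn)) x - quadForm (R (yp,yn)) η)
        + (V (yp,yn) - E) : ℝ) : ℂ)
      + ((2*xn*β + (∑ i, ∑ j, A yp i j * (x i * η j + η i * x j))
        - 2*yn*(∑ i, ∑ j, B yp i j * (x i * η j + η i * x j))
        + (∑ i, ∑ j, R (yp,yn) i j * (x i * η j + η i * x j)) : ℝ) : ℂ) * Complex.I := by
    have hsq : ((xn:ℂ) + Complex.I*(β:ℂ))^2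
        = ((xn^2 - β^2 : ℝ):ℂ) + ((2*xn*β : ℝ):ℂ)*Complex.I := by
      push_cast
      linear_combination (β:ℂ)^2 * Complex.I_sq
    simp only [pPsiSch]
    rw [hζ, quadFormC_decomp, quadFormC_decomp, quadFormC_decomp, hsq]
    push_cast
    ring
  rw [hdec] at hp
  have hRe : xn^2 - β^2 + (quadForm (A yp) x - quadForm (A yp) η)
      - 2*yn*(quadForm (B yp) x - quadForm (B yp) η)
      + (quadForm (R (yp,yn)) x - quadForm (R (yp,yn)) η)
      + (V (yp,yn) - E) = 0 := by
    have := congrArg Complex.re hp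
    simpa [← Complex.ofReal_pow] using this
  have hIm : 2*xn*β + (∑ i, ∑ j, A yp i j * (x i * η j + η i * x j))
      - 2*yn*(∑ i, ∑ j, B yp i j * (x i * η j + η i * x j))
      + (∑ i, ∑ j, R (yp,yn) i j * (x i * η j + η i * x j)) = 0 := by
    have := congrArg Complex.im hp
    simpa [← Complex.ofReal_pow] using this
  clear hp hdec hζ
  -- basic coordinate bounds
  have hcY2 : ‖yp‖ < 2*cY := by linarith
  have hxi : ∀ i, |x i| ≤ ‖x‖ := fun i => abs_coord_le_norm x i
  have hxN : (0:ℝ) ≤ ‖x‖ := norm_nonneg x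
  have hm0 : (0:ℝ) ≤ (m:ℝ) := by positivity
  have hAij : ∀ i j, |A yp i j| ≤ A0 := fun i j => (hAB yp hcY2 i j).1
  have hBij : ∀ i j, |B yp i j| ≤ A0 := fun i j => (hAB yp hcY2 i j).2.1
  have hyn2 : yn^2 ≤ u := by nlinarith [sq_abs yn, abs_nonneg yn]
  have ht2 : t*t ≤ 1 := mul_le_one₀ ht1 htpos.le ht1
  have hut2 : u*(t*t) ≤ 1 := mul_le_one₀ hu1 (by positivity) ht2
  have hmA0 : (0:ℝ) ≤ (m:ℝ)^2*A0 := by positivity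
  -- quadratic form bounds
  have b1 : |quadForm (A yp) η| ≤ (m:ℝ)^2*(A0*t*t) := by
    refine double_sum_bound _ _ fun i j => ?_
    exact abs_mul3 _ _ _ _ _ _ (hAij i j) (hηi i) (hηi j)
  have b2 : |quadForm (B yp) x| ≤ (m:ℝ)^2*(A0*‖x‖*‖x‖) := by
    refine double_sum_bound _ _ fun i j => ?_
    exact abs_mul3 _ _ _ _ _ _ (hBij i j) (hxi i) (hxi j)
  have b3 : |quadForm (B yp) η| ≤ (m:ℝ)^2*(A0*t*t) := by
    refine double_sum_bound _ _ fun i j => ?_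
    exact abs_mul3 _ _ _ _ _ _ (hBij i j) (hηi i) (hηi j)
  have b6 : |quadForm (R (yp,yn)) x| ≤ CR*u*‖x‖^2 := by
    have h := (hRb (yp,yn) hyn1 x).1
    have h2 : CR * yn^2 * ‖x‖^2 ≤ CR*u*‖x‖^2 := by
      linarith [mul_nonneg (mul_nonneg hCR.le (sub_nonneg.mpr hyn2)) (sq_nonneg ‖x‖)]
    exact h.trans h2
  have b7 : |quadForm (R (yp,yn)) η| ≤ CR*u*((m:ℝ)*t)^2 := by
    have h := (hRb (yp,yn) hyn1 η).1
    have hη2 : ‖η‖^2 ≤ ((m:ℝ)*t)^2 := pow_le_pow_left₀ (norm_nonneg η) hηn 2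
    have h2 : CR * yn^2 * ‖η‖^2 ≤ CR*u*((m:ℝ)*t)^2 := by
      linarith [mul_nonneg (mul_nonneg hCR.le (sub_nonneg.mpr hyn2)) (sq_nonneg ‖η‖),
        mul_nonneg (mul_nonneg hCR.le hupos.le) (sub_nonneg.mpr hη2)]
    exact h.trans h2
  have b8 : |quadForm (R (yp,yn)) (x+η)| ≤ CR*u*(‖x‖+(m:ℝ)*t)^2 := by
    have h := (hRb (yp,yn) hyn1 (x+η)).1
    have hxη : ‖x+η‖ ≤ ‖x‖ + (m:ℝ)*t := (norm_add_le x η).trans (by linarith)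
    have hxη2 : ‖x+η‖^2 ≤ (‖x‖ + (m:ℝ)*t)^2 := pow_le_pow_left₀ (norm_nonneg _) hxη 2
    have h2 : CR * yn^2 * ‖x+η‖^2 ≤ CR*u*(‖x‖+(m:ℝ)*t)^2 := by
      linarith [mul_nonneg (mul_nonneg hCR.le (sub_nonneg.mpr hyn2)) (sq_nonneg ‖x+η‖),
        mul_nonneg (mul_nonneg hCR.le hupos.le) (sub_nonneg.mpr hxη2)]
    exact h.trans h2
  have bcR : |∑ i, ∑ j, R (yp,yn) i j * (x i * η j + η i * x j)|
      ≤ 3*(CR*u*(‖x‖+(m:ℝ)*t)^2) := by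
    have hpol := quadForm_add (R (yp,yn)) x η
    have heq : (∑ i, ∑ j, R (yp,yn) i j * (x i * η j + η i * x j))
        = quadForm (R (yp,yn)) (x+η) - (quadForm (R (yp,yn)) x + quadForm (R (yp,yn)) η) := by
      linarith
    rw [heq]
    have h1 := abs_sub (quadForm (R (yp,yn)) (x+η))
      (quadForm (R (yp,yn)) x + quadForm (R (yp,yn)) η)
    have h2 := abs_add_le (quadForm (R (yp,yn)) x) (quadForm (R (yp,yn)) η)
    have hmono1 : CR*u*‖x‖^2 ≤ CR*u*(‖x‖+(m:ℝ)*t)^2 := by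
      linarith [mul_nonneg (mul_nonneg hCR.le hupos.le)
          (mul_nonneg hxN (mul_nonneg hm0 htpos.le)),
        mul_nonneg (mul_nonneg hCR.le hupos.le) (sq_nonneg ((m:ℝ)*t))]
    have hmono2 : CR*u*((m:ℝ)*t)^2 ≤ CR*u*(‖x‖+(m:ℝ)*t)^2 := by
      linarith [mul_nonneg (mul_nonneg hCR.le hupos.le)
          (mul_nonneg hxN (mul_nonneg hm0 htpos.le)),
        mul_nonneg (mul_nonneg hCR.le hupos.le) (sq_nonneg ‖x‖)]
    linarith only [h1, h2, b8, b6, b7, hmono1, hmono2]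
  have bcA : |∑ i, ∑ j, A yp i j * (x i * η j + η i * x j)| ≤ (m:ℝ)^2*(A0*(2*‖x‖*t)) := by
    refine double_sum_bound _ _ fun i j => ?_
    exact abs_mul_le' _ _ _ _ (hAij i j)
      (cross_bound _ _ _ _ _ _ (hxi i) (hηi j) (hηi i) (hxi j))
  have bcB : |∑ i, ∑ j, B yp i j * (x i * η j + η i * x j)| ≤ (m:ℝ)^2*(A0*(2*‖x‖*t)) := by
    refine double_sum_bound _ _ fun i j => ?_
    exact abs_mul_le' _ _ _ _ (hBij i j)
      (cross_bound _ _ _ _ _ _ (hxi i) (hηi j) (hηi i) (hxi j))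
  -- Step A : bound on ‖x‖²
  have hqA : A1*‖x‖^2 ≤ quadForm (A yp) x := hA1' yp hcY2 x
  have hVyb : |V (yp,yn) - E| ≤ |MV| := (hVb (yp,yn)).trans (le_abs_self MV)
  have e1 : (m:ℝ)^2*(A0*t*t) ≤ (m:ℝ)^2*A0 := by
    linarith [mul_le_mul_of_nonneg_left ht2 hmA0]
  have e7 : CR*u*((m:ℝ)*t)^2 ≤ CR*(m:ℝ)^2 := by
    have h := mul_le_mul_of_nonneg_left hut2 (show (0:ℝ) ≤ CR*(m:ℝ)^2 by positivity)
    linarith only [h]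
  have hyB : |2*yn*(quadForm (B yp) x - quadForm (B yp) η)|
      ≤ 2*(u*((m:ℝ)^2*(A0*‖x‖*‖x‖)) + (m:ℝ)^2*A0) := by
    have h1 : |quadForm (B yp) x - quadForm (B yp) η|
        ≤ (m:ℝ)^2*(A0*‖x‖*‖x‖) + (m:ℝ)^2*(A0*t*t) :=
      (abs_sub _ _).trans (add_le_add b2 b3)
    have h2 : |2*yn*(quadForm (B yp) x - quadForm (B yp) η)|
        = 2*(|yn| * |quadForm (B yp) x - quadForm (B yp) η|) := by
      rw [abs_mul, abs_mul, abs_two]; ring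
    rw [h2]
    have h3 : |yn| * |quadForm (B yp) x - quadForm (B yp) η|
        ≤ u*((m:ℝ)^2*(A0*‖x‖*‖x‖) + (m:ℝ)^2*(A0*t*t)) :=
      mul_le_mul hyn h1 (abs_nonneg _) hupos.le
    have h4 := mul_le_mul_of_nonneg_left hut2 hmA0
    linarith only [h3, h4]
  have e2 : 2*(u*((m:ℝ)^2*(A0*‖x‖*‖x‖))) + CR*u*‖x‖^2 ≤ (A1/2)*‖x‖^2 := by
    have h := mul_le_mul_of_nonneg_right hu3 (sq_nonneg ‖x‖)
    linarith only [h]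
  have hN2 : ‖x‖^2 ≤ S := by
    have key : A1*‖x‖^2 ≤ K - 1 + (A1/2)*‖x‖^2 := by
      have hqAup : quadForm (A yp) x = β^2 + E - V (yp,yn) - xn^2 + quadForm (A yp) η
          + 2*yn*(quadForm (B yp) x - quadForm (B yp) η)
          - quadForm (R (yp,yn)) x + quadForm (R (yp,yn)) η := by linarith
      have l1 : quadForm (A yp) η ≤ (m:ℝ)^2*A0 := le_trans (abs_le.mp b1).2 e1
      have l2 := (abs_le.mp hyB).2
      have l3 := (abs_le.mp b6).1
      have l4 : quadForm (R (yp,yn)) η ≤ CR*(m:ℝ)^2 := le_trans (abs_le.mp b7).2 e7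
      have l5 := (abs_le.mp hVyb).1
      have lsq := sq_nonneg xn
      rw [hKdef]
      linarith only [hqA, hqAup, l1, l2, l3, l4, l5, lsq, e2]
    rw [hSdef, le_div_iff₀ hA1]
    linarith [key]
  have hNle : ‖x‖ ≤ S + 1 := by
    linarith only [sq_nonneg (‖x‖ - 1), hN2, hSpos.le]
  have hmt : (m:ℝ)*t ≤ (m:ℝ) := by
    linarith only [mul_le_mul_of_nonneg_left ht1 hm0]
  have htcρ : t ≤ cρ := by
    have h := mul_le_mul_of_nonneg_left hu1 hcρ.le
    rw [htdef]; linarith only [h]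
  -- Step C : bound on |xn|
  have gA : |∑ i, ∑ j, A yp i j * (x i * η j + η i * x j)| ≤ 2*(m:ℝ)^2*A0*(S+1)*t := by
    refine bcA.trans ?_
    linarith only [mul_le_mul_of_nonneg_left hNle
      (show (0:ℝ) ≤ 2*(m:ℝ)^2*A0*t by positivity)]
  have gB : |∑ i, ∑ j, B yp i j * (x i * η j + η i * x j)| ≤ 2*(m:ℝ)^2*A0*(S+1)*t := by
    refine bcB.trans ?_
    linarith only [mul_le_mul_of_nonneg_left hNle
      (show (0:ℝ) ≤ 2*(m:ℝ)^2*A0*t by positivity)]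
  have gyB : |2*yn*(∑ i, ∑ j, B yp i j * (x i * η j + η i * x j))|
      ≤ 2*(2*(m:ℝ)^2*A0*(S+1)*t) := by
    have h2 : |2*yn*(∑ i, ∑ j, B yp i j * (x i * η j + η i * x j))|
        = 2*(|yn| * |∑ i, ∑ j, B yp i j * (x i * η j + η i * x j)|) := by
      rw [abs_mul, abs_mul, abs_two]; ring
    rw [h2]
    have h3 : |yn| * |∑ i, ∑ j, B yp i j * (x i * η j + η i * x j)|
        ≤ 1 * (2*(m:ℝ)^2*A0*(S+1)*t) :=
      mul_le_mul hyn1 gB (abs_nonneg _) one_pos.le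
    linarith only [h3]
  have hNmt : ‖x‖ + (m:ℝ)*t ≤ S + 1 + (m:ℝ) := by linarith only [hNle, hmt]
  have hsq2 : (‖x‖ + (m:ℝ)*t)^2 ≤ (S+1+(m:ℝ))^2 :=
    pow_le_pow_left₀ (by positivity) hNmt 2
  have gR : |∑ i, ∑ j, R (yp,yn) i j * (x i * η j + η i * x j)|
      ≤ 3*(CR*u*(S+1+(m:ℝ))^2) := by
    refine bcR.trans ?_
    linarith only [mul_le_mul_of_nonneg_left hsq2
      (show (0:ℝ) ≤ 3*(CR*u) by positivity)]
  have hxnb : 2 * |xn| * β ≤ C2*u := by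
    have him : 2*xn*β = -(∑ i, ∑ j, A yp i j * (x i * η j + η i * x j))
        + 2*yn*(∑ i, ∑ j, B yp i j * (x i * η j + η i * x j))
        - (∑ i, ∑ j, R (yp,yn) i j * (x i * η j + η i * x j)) := by
      linarith only [hIm]
    have habs : |2*xn*β| ≤ 2*(m:ℝ)^2*A0*(S+1)*t + 2*(2*(m:ℝ)^2*A0*(S+1)*t)
        + 3*(CR*u*(S+1+(m:ℝ))^2) := by
      rw [him]
      have t1 := abs_sub (-(∑ i, ∑ j, A yp i j * (x i * η j + η i * x j))
          + 2*yn*(∑ i, ∑ j, B yp i j * (x i * η j + η i * x j)))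
        (∑ i, ∑ j, R (yp,yn) i j * (x i * η j + η i * x j))
      have t2 := abs_add_le (-(∑ i, ∑ j, A yp i j * (x i * η j + η i * x j)))
        (2*yn*(∑ i, ∑ j, B yp i j * (x i * η j + η i * x j)))
      rw [abs_neg] at t2
      linarith only [t1, t2, gA, gyB, gR]
    have heq2 : |2*xn*β| = 2 * |xn| * β := by
      rw [abs_mul, abs_mul, abs_two, abs_of_pos hβ]
    have hCu : 2*(m:ℝ)^2*A0*(S+1)*t + 2*(2*(m:ℝ)^2*A0*(S+1)*t)
        + 3*(CR*u*(S+1+(m:ℝ))^2) = C2*u := by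
      rw [hC2def, htdef]; ring
    rw [heq2, hCu] at habs
    exact habs
  have hxn : |xn| ≤ C2/β*τ0 := by
    have hCu2 : C2*u = 2*(C2*τ0) := by rw [hudef]; ring
    have h1 : |xn| ≤ C2*τ0/β := by
      rw [le_div_iff₀ hβ]
      linarith only [hxnb, hCu2]
    have h2 : C2*τ0/β = C2/β*τ0 := by ring
    rw [h2] at h1
    exact h1
  constructor
  · -- first conclusion
    have hEq : quadForm (A yp) x - (β^2 + E - V (yp,yn))
        = -xn^2 + quadForm (A yp) η
          + 2*yn*(quadForm (B yp) x - quadForm (B yp) η)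
          - quadForm (R (yp,yn)) x + quadForm (R (yp,yn)) η := by
      linarith only [hRe]
    have dxn : xn^2 ≤ (C2/β)^2*τ0 := by
      have h := pow_le_pow_left₀ (abs_nonneg xn) hxn 2
      rw [sq_abs] at h
      have h2 : (C2/β*τ0)^2 ≤ (C2/β)^2*τ0 := by
        have h3 : (C2/β*τ0)^2 = ((C2/β)^2*τ0)*τ0 := by ring
        rw [h3]
        have h4 := mul_le_mul_of_nonneg_left hτ0half
          (show (0:ℝ) ≤ (C2/β)^2*τ0 by positivity)
        linarith only [h4]
      exact h.trans h2
    have hτ0h : τ0 ≤ 1/2 := by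
      rw [hudef] at hu1; linarith only [hu1]
    have d1 : |quadForm (A yp) η| ≤ 2*(m:ℝ)^2*A0*cρ^2*τ0 := by
      refine b1.trans ?_
      have h1 : (m:ℝ)^2*(A0*t*t) = (4*(m:ℝ)^2*A0*cρ^2*τ0)*τ0 := by
        rw [htdef, hudef]; ring
      have h2 : (4*(m:ℝ)^2*A0*cρ^2*τ0)*τ0 ≤ (4*(m:ℝ)^2*A0*cρ^2*τ0)*(1/2) :=
        mul_le_mul_of_nonneg_left hτ0h (by positivity)
      rw [h1]; linarith only [h2]
    have d2 : |2*yn*(quadForm (B yp) x - quadForm (B yp) η)|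
        ≤ 4*(m:ℝ)^2*A0*S*τ0 + 4*(m:ℝ)^2*A0*cρ^2*τ0 := by
      have h1 : |quadForm (B yp) x - quadForm (B yp) η|
          ≤ (m:ℝ)^2*(A0*‖x‖*‖x‖) + (m:ℝ)^2*(A0*t*t) :=
        (abs_sub _ _).trans (add_le_add b2 b3)
      have h2 : |2*yn*(quadForm (B yp) x - quadForm (B yp) η)|
          = 2*(|yn| * |quadForm (B yp) x - quadForm (B yp) η|) := by
        rw [abs_mul, abs_mul, abs_two]; ring
      rw [h2]
      have h3 : |yn| * |quadForm (B yp) x - quadForm (B yp) η|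
          ≤ u*((m:ℝ)^2*(A0*‖x‖*‖x‖) + (m:ℝ)^2*(A0*t*t)) :=
        mul_le_mul hyn h1 (abs_nonneg _) hupos.le
      have h4 : u*((m:ℝ)^2*(A0*‖x‖*‖x‖)) ≤ u*((m:ℝ)^2*A0*S) := by
        have := mul_le_mul_of_nonneg_left hN2
          (show (0:ℝ) ≤ u*((m:ℝ)^2*A0) by positivity)
        linarith only [this]
      have h5 : u*((m:ℝ)^2*(A0*t*t)) ≤ u*((m:ℝ)^2*A0*cρ^2) := by
        have hcc : t*t ≤ cρ*cρ := mul_le_mul htcρ htcρ htpos.le hcρ.le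
        have := mul_le_mul_of_nonneg_left hcc
          (show (0:ℝ) ≤ u*((m:ℝ)^2*A0) by positivity)
        linarith only [this]
      have h6 : 2*(u*((m:ℝ)^2*A0*S) + u*((m:ℝ)^2*A0*cρ^2))
          = 4*(m:ℝ)^2*A0*S*τ0 + 4*(m:ℝ)^2*A0*cρ^2*τ0 := by
        rw [hudef]; ring
      linarith only [h3, h4, h5, h6]
    have d3 : |quadForm (R (yp,yn)) x| ≤ 2*CR*S*τ0 := by
      refine b6.trans ?_
      have h1 := mul_le_mul_of_nonneg_left hN2 (show (0:ℝ) ≤ CR*u by positivity)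
      have h2 : CR*u*S = 2*CR*S*τ0 := by rw [hudef]; ring
      linarith only [h1, h2]
    have d4 : |quadForm (R (yp,yn)) η| ≤ 2*CR*(m:ℝ)^2*cρ^2*τ0 := by
      refine b7.trans ?_
      have hcc : t*t ≤ cρ*cρ := mul_le_mul htcρ htcρ htpos.le hcρ.le
      have h1 := mul_le_mul_of_nonneg_left hcc
        (show (0:ℝ) ≤ CR*u*(m:ℝ)^2 by positivity)
      have h2 : CR*u*(m:ℝ)^2*(cρ*cρ) = 2*CR*(m:ℝ)^2*cρ^2*τ0 := by rw [hudef]; ring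
      have h3 : CR*u*((m:ℝ)*t)^2 = CR*u*(m:ℝ)^2*(t*t) := by ring
      linarith only [h1, h2, h3]
    have hCτ : (C2/β + C3 + 1)*τ0 = C2/β*τ0
        + ((C2/β)^2*τ0 + 6*(m:ℝ)^2*A0*cρ^2*τ0 + 4*(m:ℝ)^2*A0*S*τ0
          + 2*CR*S*τ0 + 2*CR*(m:ℝ)^2*cρ^2*τ0) + τ0 := by
      rw [hC3def]; ring
    rw [hEq, hCτ]
    have hs1 : (0:ℝ) ≤ C2/β*τ0 := by positivity
    have l1 := abs_le.mp d1
    have l2 := abs_le.mp d2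
    have l3 := abs_le.mp d3
    have l4 := abs_le.mp d4
    refine abs_le.mpr ⟨?_, ?_⟩
    · linarith only [dxn, l1.1, l2.1, l3.2, l4.1, hs1, hτ0pos.le, sq_nonneg xn]
    · linarith only [dxn, l1.2, l2.2, l3.1, l4.2, hs1, hτ0pos.le, sq_nonneg xn]
  · -- second conclusion
    have hp1 : (0:ℝ) ≤ (C3+1)*τ0 := by positivity
    have hp2 : (C2/β + C3 + 1)*τ0 = C2/β*τ0 + (C3+1)*τ0 := by ring
    rw [hp2]
    linarith only [hxn, hp1]


end
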